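/- Consider the elitist (1+1) EA with bitwise mutation rate 1/n on {0,1}^n maximising the Two-Max function f(x) = n − min{h(x,0⃗), h(x,1⃗)}, where h is Hamming distance. The expected runtime (number of generations to reach an optimum 0⃗ or 1⃗) from any initial point is at most e·n·H_{⌊n/2⌋} = O(n log n), where H_m is the m-th harmonic number. -/

import Mathlib

/-- Bitwise mutation with rate `1/n`: probability of producing mutant `y`
from `x` is `(1/n)^{H(x,y)} (1-1/n)^{n-H(x,y)}` with `H` the Hamming
distance. -/
noncomputable def bitP (n : ℕ) (x y : Fin n → Bool) : ℝ :=
  (1 / n) ^ (hammingDist x y) * (1 - 1 / n) ^ (n - hammingDist x y)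

/-- The Two-Max function `f(x) = n - min{H(x,0⃗), H(x,1⃗)}`. -/
noncomputable def twoMax (n : ℕ) (x : Fin n → Bool) : ℝ :=
  (n : ℝ) - (min (hammingDist x (fun _ => false)) (hammingDist x (fun _ => true)) : ℕ)

/-- Transition kernel of the strictly elitist (1+1) EA. -/
noncomputable def eaP {S : Type*} [Fintype S] [DecidableEq S]
    (Pm : S → S → ℝ) (f : S → ℝ) (x y : S) : ℝ :=
  if y = x then 1 - ∑ z, (if f x < f z then Pm x z else 0)
  else if f x < f y then Pm x y else 0


open Finset
open Finset
variable {n : ℕ}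

lemma hd_const_false (x : Fin n → Bool) :
    hammingDist x (fun _ => false) = #{i | x i = true} := by
  unfold hammingDist; congr 1; ext i; simp

lemma hd_const_true (x : Fin n → Bool) :
    hammingDist x (fun _ => true) = #{i | x i = false} := by
  unfold hammingDist; congr 1; ext i; simp

lemma card_tf (x : Fin n → Bool) :
    #{i | x i = true} + #{i | x i = false} = n := by
  have := Finset.card_filter_add_card_filter_not (s := (univ : Finset (Fin n)))
    (p := fun i => x i = true)
  simpa [Bool.not_eq_true] using this

lemma hd_flip (x : Fin n → Bool) (i : Fin n) :
    hammingDist x (Function.update x i (!x i)) = 1 := by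
  unfold hammingDist
  have : ({j | x j ≠ Function.update x i (!x i) j} : Finset (Fin n)) = {i} := by
    ext j
    rcases eq_or_ne j i with h | h
    · subst h; simp [Function.update_self]
    · simp [Function.update_of_ne h, h]
  rw [this]; simp

lemma card_flip_eq (x : Fin n → Bool) (i : Fin n) {b : Bool} (h : x i = b) :
    #{j | Function.update x i (!x i) j = b} = #{j | x j = b} - 1 := by
  have hs : ({j | Function.update x i (!x i) j = b} : Finset (Fin n))
      = ({j | x j = b} : Finset (Fin n)).erase i := by
    ext j
    rcases eq_or_ne j i with hj | hj
    · subst hj; simp [Function.update_self, h]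
    · simp [Function.update_of_ne hj, hj, Finset.mem_erase]
  rw [hs, Finset.card_erase_of_mem (by simp [h])]

lemma card_flip_ne (x : Fin n → Bool) (i : Fin n) {b : Bool} (h : x i ≠ b) :
    #{j | Function.update x i (!x i) j = b} = #{j | x j = b} + 1 := by
  have hb : (!x i) = b := by revert h; cases x i <;> cases b <;> simp
  have hs : ({j | Function.update x i (!x i) j = b} : Finset (Fin n))
      = insert i ({j | x j = b} : Finset (Fin n)) := by
    ext j
    rcases eq_or_ne j i with hj | hj
    · subst hj; simp [Function.update_self, hb]
    · simp [Function.update_of_ne hj, hj]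
  rw [hs, Finset.card_insert_of_notMem (by simp [h])]

lemma twoMax_lt_iff (x y : Fin n → Bool) :
    twoMax n x < twoMax n y ↔
      min (hammingDist y (fun _ => false)) (hammingDist y (fun _ => true)) <
      min (hammingDist x (fun _ => false)) (hammingDist x (fun _ => true)) := by
  simp [twoMax, sub_lt_sub_iff_left, Nat.cast_lt]

lemma one_sub_inv_nonneg (n : ℕ) : (0:ℝ) ≤ 1 - 1/(n:ℝ) := by
  rcases Nat.eq_zero_or_pos n with h | h
  · simp [h]
  · have h1 : (1:ℝ) ≤ n := by exact_mod_cast h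
    have : 1/(n:ℝ) ≤ 1 := by
      rw [div_le_one (by linarith)]; linarith
    linarith

lemma bitP_nonneg (n : ℕ) (x y : Fin n → Bool) : 0 ≤ bitP n x y :=
  mul_nonneg (pow_nonneg (by positivity) _) (pow_nonneg (one_sub_inv_nonneg n) _)

lemma bitP_flip (x : Fin n → Bool) (i : Fin n) :
    bitP n x (Function.update x i (!x i)) = (1/(n:ℝ)) * (1 - 1/(n:ℝ))^(n-1) := by
  unfold bitP; rw [hd_flip]; ring

lemma flip_injective (x : Fin n → Bool) :
    Function.Injective (fun i => Function.update x i (!x i)) := by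
  intro i j h
  by_contra hne
  have h2 : Function.update x i (!x i) i = Function.update x j (!x j) i := congrFun h i
  rw [Function.update_self, Function.update_of_ne hne] at h2
  simp at h2

lemma sum_ge_of_T (n m : ℕ) (x : Fin n → Bool) (T : Finset (Fin n))
    (hcard : T.card = m + 1)
    (hflip : ∀ i ∈ T, twoMax n x < twoMax n (Function.update x i (!x i))) :
    ((m:ℝ)+1) * ((1/(n:ℝ)) * (1 - 1/(n:ℝ))^(n-1)) ≤
      ∑ z, (if twoMax n x < twoMax n z then bitP n x z else 0) := by
  classical
  have hsub : T.image (fun i => Function.update x i (!x i)) ⊆ univ := Finset.subset_univ _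
  have hnn : ∀ z ∈ univ, z ∉ T.image (fun i => Function.update x i (!x i)) →
      0 ≤ (if twoMax n x < twoMax n z then bitP n x z else 0) := by
    intro z _ _
    by_cases h : twoMax n x < twoMax n z
    · simpa [h] using bitP_nonneg n x z
    · simp [h]
  calc ((m:ℝ)+1) * ((1/(n:ℝ)) * (1 - 1/(n:ℝ))^(n-1))
      = ∑ i ∈ T, ((1/(n:ℝ)) * (1 - 1/(n:ℝ))^(n-1)) := by
        rw [Finset.sum_const, hcard]; push_cast; ring
    _ = ∑ i ∈ T, (if twoMax n x < twoMax n (Function.update x i (!x i)) then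
          bitP n x (Function.update x i (!x i)) else 0) := by
        apply Finset.sum_congr rfl
        intro i hi
        rw [if_pos (hflip i hi), bitP_flip]
    _ = ∑ z ∈ T.image (fun i => Function.update x i (!x i)),
          (if twoMax n x < twoMax n z then bitP n x z else 0) := by
        rw [Finset.sum_image (fun i _ j _ h => flip_injective x h)]
    _ ≤ ∑ z, (if twoMax n x < twoMax n z then bitP n x z else 0) :=
        Finset.sum_le_sum_of_subset_of_nonneg hsub hnn

lemma exp_bound {n : ℕ} (hn : 2 ≤ n) :
    Real.exp (-1) ≤ (1 - 1 / (n : ℝ)) ^ (n - 1) := by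
  have hn1 : (1 : ℝ) ≤ (n : ℝ) - 1 := by
    have : (2:ℝ) ≤ n := by exact_mod_cast hn
    linarith
  have hpos : (0:ℝ) < (n:ℝ) - 1 := by linarith
  have hnpos : (0:ℝ) < n := by linarith
  set t : ℝ := 1 / ((n:ℝ) - 1) with ht
  have htpos : 0 < t := by positivity
  have h1 : 1 + t ≤ Real.exp t := by
    have := Real.add_one_le_exp t; linarith
  have h2 : Real.exp (-t) ≤ 1 - 1 / n := by
    have heq : 1 + t = (n:ℝ)/((n:ℝ)-1) := by
      rw [ht]; field_simp; ring
    have hexp : (n:ℝ)/((n:ℝ)-1) ≤ Real.exp t := heq ▸ h1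
    have hinv : (Real.exp t)⁻¹ ≤ ((n:ℝ)/((n:ℝ)-1))⁻¹ :=
      inv_anti₀ (by positivity) hexp
    rw [Real.exp_neg]
    calc (Real.exp t)⁻¹ ≤ ((n:ℝ)/((n:ℝ)-1))⁻¹ := hinv
      _ = 1 - 1/n := by field_simp
  have h3 : Real.exp (-1) = Real.exp (-t) ^ (n - 1) := by
    rw [← Real.exp_nat_mul]
    congr 1
    have : ((n - 1 : ℕ) : ℝ) = (n:ℝ) - 1 := by
      have : (1:ℕ) ≤ n := by omega
      push_cast [Nat.cast_sub this]; ring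
    rw [this, ht]
    field_simp
  rw [h3]
  exact pow_le_pow_left₀ (Real.exp_pos _).le h2 _

lemma sum_better_ge (n m : ℕ) (x : Fin n → Bool)
    (hm : min (hammingDist x (fun _ => false)) (hammingDist x (fun _ => true)) = m + 1) :
    ((m:ℝ)+1) * ((1/(n:ℝ)) * (1 - 1/(n:ℝ))^(n-1)) ≤
      ∑ z, (if twoMax n x < twoMax n z then bitP n x z else 0) := by
  classical
  rw [hd_const_false, hd_const_true] at hm
  have hw : #{i | x i = true} + #{i | x i = false} = n := card_tf x
  by_cases hb : #{i | x i = true} ≤ #{i | x i = false}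
  · apply sum_ge_of_T n m x ({i | x i = true} : Finset (Fin n))
    · omega
    · intro i hi
      have hxi : x i = true := by simpa using hi
      rw [twoMax_lt_iff]
      rw [hd_const_false, hd_const_true, hd_const_false, hd_const_true,
        card_flip_eq x i hxi, card_flip_ne x i (by simp [hxi])]
      omega
  · apply sum_ge_of_T n m x ({i | x i = false} : Finset (Fin n))
    · omega
    · intro i hi
      have hxi : x i = false := by simpa using hi
      rw [twoMax_lt_iff]
      rw [hd_const_false, hd_const_true, hd_const_false, hd_const_true,
        card_flip_ne x i (by simp [hxi]), card_flip_eq x i hxi]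
      omega

theorem stmt9 (n : ℕ) (hn : 1 ≤ n) (G : (Fin n → Bool) → ℝ)
    (hG0 : ∀ x, 0 ≤ G x)
    (hGopt : ∀ x ∈ ({fun _ => false, fun _ => true} : Set (Fin n → Bool)), G x = 0)
    (hGrec : ∀ x ∉ ({fun _ => false, fun _ => true} : Set (Fin n → Bool)),
      G x = 1 + ∑ y, eaP (bitP n) (twoMax n) x y * G y) :
    ∀ x, G x ≤ Real.exp 1 * n * ∑ l ∈ Finset.range (n / 2), (1 : ℝ) / (l + 1) := by
  classical
  set f := twoMax n with hf
  set d : (Fin n → Bool) → ℕ :=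
    fun x => min (hammingDist x (fun _ => false)) (hammingDist x (fun _ => true)) with hd
  set B : ℕ → ℝ := fun m => Real.exp 1 * n * ∑ l ∈ Finset.range m, (1:ℝ)/(l+1) with hB
  have hBmono : Monotone B := by
    intro a b hab
    apply mul_le_mul_of_nonneg_left _ (by positivity)
    apply Finset.sum_le_sum_of_subset_of_nonneg (Finset.range_subset_range.2 hab)
    intro l _ _; positivity
  have key : ∀ m : ℕ, ∀ x, d x = m → G x ≤ B m := by
    intro m
    induction m using Nat.strong_induction_on with
    | _ m ih =>
      match m with
      | 0 =>
        intro x hx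
        have hopt : x ∈ ({fun _ => false, fun _ => true} : Set (Fin n → Bool)) := by
          rcases Nat.min_eq_zero_iff.1 hx with h | h
          · exact Or.inl (hammingDist_eq_zero.1 h)
          · exact Or.inr (hammingDist_eq_zero.1 h)
        rw [hGopt x hopt]
        simp [hB]
      | m + 1 =>
        intro x hx
        -- basic facts
        have hw : #{i | x i = true} + #{i | x i = false} = n := card_tf x
        have hx' : min #{i | x i = true} #{i | x i = false} = m + 1 := by
          have h0 := hx
          simp only [hd, hd_const_false, hd_const_true] at h0
          exact h0
        have hn2 : 2 ≤ n := by omega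
        have hnR : (0:ℝ) < n := by exact_mod_cast Nat.lt_of_lt_of_le Nat.zero_lt_two hn2
        have hxopt : x ∉ ({fun _ => false, fun _ => true} : Set (Fin n → Bool)) := by
          intro h
          rcases h with h | h <;>
            · rw [hd, h] at hx; simp [hammingDist] at hx <;> omega
        set s : ℝ := ∑ z, (if f x < f z then bitP n x z else 0) with hs
        -- lower bound on s
        have hp1 : Real.exp (-1) / n ≤ (1/(n:ℝ)) * (1 - 1/(n:ℝ))^(n-1) := by
          have h := exp_bound hn2
          have he : Real.exp (-1) / (n:ℝ) = (1/(n:ℝ)) * Real.exp (-1) := by ring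
          rw [he]
          exact mul_le_mul_of_nonneg_left h (by positivity)
        have hslb : ((m:ℝ)+1) * (Real.exp (-1) / n) ≤ s := by
          calc ((m:ℝ)+1) * (Real.exp (-1) / n)
              ≤ ((m:ℝ)+1) * ((1/(n:ℝ)) * (1 - 1/(n:ℝ))^(n-1)) :=
                mul_le_mul_of_nonneg_left hp1 (by positivity)
            _ ≤ s := sum_better_ge n m x hx
        have hspos : 0 < s :=
          lt_of_lt_of_le (by positivity) hslb
        -- the recursion
        have hrec := hGrec x hxopt
        have heaPxx : eaP (bitP n) f x x = 1 - s := by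
          rw [hs]; unfold eaP; rw [if_pos rfl]
        have hsplit : ∑ y, eaP (bitP n) f x y * G y
            = (1 - s) * G x + ∑ y, (if f x < f y then bitP n x y else 0) * G y := by
          rw [← Finset.add_sum_erase Finset.univ _ (Finset.mem_univ x), heaPxx]
          congr 1
          have h1 : ∑ y ∈ Finset.univ.erase x, eaP (bitP n) f x y * G y
              = ∑ y ∈ Finset.univ.erase x, (if f x < f y then bitP n x y else 0) * G y := by
            apply Finset.sum_congr rfl
            intro y hy
            have hyx : y ≠ x := Finset.ne_of_mem_erase hy
            have h2 : eaP (bitP n) f x y = if f x < f y then bitP n x y else 0 := by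
              unfold eaP; rw [if_neg hyx]
            rw [h2]
          rw [h1, Finset.sum_erase _ (by simp)]
        set T : ℝ := ∑ y, (if f x < f y then bitP n x y else 0) * G y with hT
        have hkey : s * G x = 1 + T := by
          rw [hsplit] at hrec
          rw [sub_mul, one_mul] at hrec
          linarith
        -- bound T
        have hTb : T ≤ s * B m := by
          rw [hs, Finset.sum_mul]
          apply Finset.sum_le_sum
          intro y _
          by_cases hlt : f x < f y
          · simp only [if_pos hlt]
            apply mul_le_mul_of_nonneg_left _ (bitP_nonneg n x y)
            have hdy : d y ≤ m := by
              have h3 := (twoMax_lt_iff x y).1 hlt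
              have h4 : d y < d x := h3
              omega
            calc G y ≤ B (d y) := ih (d y) (by omega) y rfl
              _ ≤ B m := hBmono hdy
          · simp [hlt]
        have hGx : G x ≤ 1/s + B m := by
          have h1 : s * G x ≤ 1 + s * B m := by linarith
          have h2 : G x ≤ (1 + s * B m) / s := by
            rw [le_div_iff₀ hspos, mul_comm]
            exact h1
          calc G x ≤ (1 + s * B m) / s := h2
            _ = 1/s + B m := by rw [add_div, mul_div_cancel_left₀ _ hspos.ne']
        have hinv : 1/s ≤ Real.exp 1 * n / ((m:ℝ)+1) := by
          have hc : (0:ℝ) < ((m:ℝ)+1) * (Real.exp (-1) / n) := by positivity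
          have := one_div_le_one_div_of_le hc hslb
          calc 1/s ≤ 1/(((m:ℝ)+1) * (Real.exp (-1) / n)) := this
            _ = Real.exp 1 * n / ((m:ℝ)+1) := by
              rw [Real.exp_neg]
              field_simp
        have hBstep : B (m+1) = B m + Real.exp 1 * n / ((m:ℝ)+1) := by
          rw [hB]
          simp only [Finset.sum_range_succ]
          push_cast
          ring
        rw [hBstep]
        linarith
  intro x
  have hw : #{i | x i = true} + #{i | x i = false} = n := card_tf x
  have hdx : d x ≤ n / 2 := by
    have h0 : d x = min #{i | x i = true} #{i | x i = false} := by
      simp only [hd, hd_const_false, hd_const_true]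
    omega
  calc G x ≤ B (d x) := key (d x) x rfl
    _ ≤ B (n/2) := hBmono hdx
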